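/- Let d ∈ ℂ with d ≠ 2, and 𝔗 = (1/(4−2d)) · [[1−d, 1],[1, 1−d]]. Then for all k ∈ ℂ with dk − 2i ≠ 0 (and σ₀ − 2(1+ik)𝔗 invertible), the S-matrix S(k) = (σ₀ − 2(1−ik)𝔗)(σ₀ − 2(1+ik)𝔗)⁻¹ equals (1/(dk−2i)) · [[−dk, 2i],[2i, −dk]]. -/

import Mathlib

open Matrix Complex

noncomputable def σ₀ : Matrix (Fin 2) (Fin 2) ℂ := 1
noncomputable def σ₁ : Matrix (Fin 2) (Fin 2) ℂ := !![0, 1; 1, 0]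
noncomputable def σ₂ : Matrix (Fin 2) (Fin 2) ℂ := !![0, -I; I, 0]
noncomputable def σ₃ : Matrix (Fin 2) (Fin 2) ℂ := !![1, 0; 0, -1]

theorem S_matrix_delta_prime (d : ℂ) (hd : d ≠ 2)
    (𝔗 : Matrix (Fin 2) (Fin 2) ℂ)
    (h𝔗 : 𝔗 = (4 - 2 * d)⁻¹ • !![1 - d, 1; 1, 1 - d])
    (k : ℂ) (hk : d * k - 2 * I ≠ 0)
    (hinv : IsUnit (σ₀ - (2 * (1 + I * k)) • 𝔗)) :
    (σ₀ - (2 * (1 - I * k)) • 𝔗) * (σ₀ - (2 * (1 + I * k)) • 𝔗)⁻¹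
      = (d * k - 2 * I)⁻¹ • !![-d * k, 2 * I; 2 * I, -d * k] := by
  have hdet : IsUnit (σ₀ - (2 * (1 + I * k)) • 𝔗).det :=
    (Matrix.isUnit_iff_isUnit_det _).mp hinv
  haveI := (σ₀ - (2 * (1 + I * k)) • 𝔗).invertibleOfIsUnitDet hdet
  rw [Matrix.mul_inv_eq_iff_eq_mul_of_invertible]
  have h42 : (4 : ℂ) - 2 * d ≠ 0 := by
    intro h; apply hd; linear_combination -h / 2
  have hk' : k * d - 2 * I ≠ 0 := by rwa [mul_comm]
  subst h𝔗
  ext i j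
  fin_cases i <;> fin_cases j <;>
    simp [σ₀, Matrix.mul_apply, Fin.sum_univ_two, Matrix.one_apply] <;>
    field_simp
  · linear_combination (4 * k * d) * Complex.I_sq
  · linear_combination (-2 * k * d) * Complex.I_sq
  · linear_combination (-2 * k * d) * Complex.I_sq
  · linear_combination (4 * k * d) * Complex.I_sq
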